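/- Armijo backtracking terminates: if j : ℝ^N → ℝ is continuously differentiable, u ∈ [0,1]^N, g = ∇j(u) ≠ 0, and u is not stationary (i.e. P_U(u − αg) ≠ u for small α > 0), then there exists ᾱ > 0 such that for all α ∈ (0, ᾱ], j(P_U(u − αg)) ≤ j(u) − (σ/α)‖P_U(u − αg) − u‖² for fixed σ ∈ (0, 1/2), where P_U is the projection onto [0,1]^N. -/

import Mathlib

open Set Filter Topology
open scoped RealInnerProductSpace

/-- Armijo backtracking terminates: if j is C¹, u ∈ [0,1]^N, g = ∇j(u) ≠ 0, u is not
stationary (the projected gradient step moves u for all small α > 0), and σ ∈ (0,1/2),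
then there is ᾱ > 0 such that for all α ∈ (0, ᾱ] the sufficient decrease condition
j(P(u − αg)) ≤ j(u) − (σ/α)‖P(u − αg) − u‖² holds, where P is the componentwise
clamping projection onto [0,1]^N. -/
theorem stmt19 (N : ℕ) (j : EuclideanSpace ℝ (Fin N) → ℝ) (hj : ContDiff ℝ 1 j)
    (P : EuclideanSpace ℝ (Fin N) → EuclideanSpace ℝ (Fin N))
    (hP : ∀ w : EuclideanSpace ℝ (Fin N), ∀ i, P w i = min (max (w i) 0) 1)
    (u : EuclideanSpace ℝ (Fin N)) (hu : ∀ i, u i ∈ Set.Icc (0 : ℝ) 1)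
    (hg : gradient j u ≠ 0)
    (hnonstat : ∃ α₀ > (0 : ℝ), ∀ α ∈ Set.Ioc (0 : ℝ) α₀, P (u - α • gradient j u) ≠ u)
    (σ : ℝ) (hσ : σ ∈ Set.Ioo (0 : ℝ) (1 / 2)) :
    ∃ ᾱ > (0 : ℝ), ∀ α ∈ Set.Ioc (0 : ℝ) ᾱ,
      j (P (u - α • gradient j u)) ≤
        j u - (σ / α) * ‖P (u - α • gradient j u) - u‖ ^ 2 := by
  obtain ⟨σpos, σlt⟩ := hσ
  set g : EuclideanSpace ℝ (Fin N) := gradient j u with hgdef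
  -- N is positive
  rcases Nat.eq_zero_or_pos N with hN | hN
  · exfalso
    apply hg
    ext i
    exact absurd i.isLt (by omega)
  -- the effective direction h
  set h : EuclideanSpace ℝ (Fin N) :=
    WithLp.toLp 2 (fun i => if (0 < g i ∧ u i = 0) ∨ (g i < 0 ∧ u i = 1) then 0 else g i) with hhdef
  have hh_apply : ∀ i, h i = if (0 < g i ∧ u i = 0) ∨ (g i < 0 ∧ u i = 1) then 0 else g i :=
    fun i => rfl
  -- per-component thresholds
  set b : Fin N → ℝ := fun i =>
    if 0 < g i ∧ 0 < u i then u i / g i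
    else if g i < 0 ∧ u i < 1 then (1 - u i) / (-g i) else 1 with hbdef
  have hbpos : ∀ i, 0 < b i := by
    intro i
    simp only [hbdef]
    split_ifs with h1 h2
    · exact div_pos h1.2 h1.1
    · exact div_pos (by linarith [h2.2]) (by linarith [h2.1])
    · norm_num
  have hne : (Finset.univ : Finset (Fin N)).Nonempty := ⟨⟨0, hN⟩, Finset.mem_univ _⟩
  set α₁ : ℝ := Finset.univ.inf' hne b with hα₁def
  have hα₁pos : 0 < α₁ := by
    rw [hα₁def, Finset.lt_inf'_iff]
    exact fun i _ => hbpos i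
  -- key: projection is linear for small α
  have key : ∀ α : ℝ, 0 < α → α ≤ α₁ → P (u - α • g) = u - α • h := by
    intro α hαpos hαle
    ext i
    have hbi : α ≤ b i := le_trans hαle (Finset.inf'_le _ (Finset.mem_univ i))
    rw [hP]
    have hsub : (u - α • g) i = u i - α * g i := rfl
    have hsub' : (u - α • h) i = u i - α * h i := rfl
    rw [hsub, hsub', hh_apply i]
    obtain ⟨hu0, hu1⟩ := hu i
    rcases lt_trichotomy (g i) 0 with hgi | hgi | hgi
    · rcases eq_or_lt_of_le hu1 with hui | hui
      · rw [if_pos (Or.inr ⟨hgi, hui⟩)]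
        have hag : α * g i ≤ 0 := mul_nonpos_of_nonneg_of_nonpos hαpos.le hgi.le
        have h1 : (1:ℝ) ≤ u i - α * g i := by rw [hui]; linarith
        rw [max_eq_left (by linarith), min_eq_right h1, mul_zero, sub_zero, hui]
      · rw [if_neg (fun hcon => by rcases hcon with ⟨h1, h2⟩ | ⟨h1, h2⟩ <;> linarith)]
        have hbi' : b i = (1 - u i) / (-g i) := by
          simp only [hbdef]
          rw [if_neg (fun hcon => by linarith [hcon.1]), if_pos ⟨hgi, hui⟩]
        rw [hbi'] at hbi
        have h1 : u i - α * g i ≤ 1 := by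
          have := (le_div_iff₀ (by linarith : (0:ℝ) < -g i)).mp hbi
          nlinarith
        have hag : α * g i ≤ 0 := mul_nonpos_of_nonneg_of_nonpos hαpos.le hgi.le
        have h0 : 0 ≤ u i - α * g i := by linarith
        rw [max_eq_left h0, min_eq_left h1]
    · rw [if_neg (fun hcon => by rcases hcon with ⟨h1, h2⟩ | ⟨h1, h2⟩ <;> linarith)]
      rw [hgi, mul_zero, sub_zero, max_eq_left hu0, min_eq_left hu1]
    · rcases eq_or_lt_of_le hu0 with hui | hui
      · rw [if_pos (Or.inl ⟨hgi, hui.symm⟩)]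
        have hag : 0 ≤ α * g i := mul_nonneg hαpos.le hgi.le
        have h1 : u i - α * g i ≤ 0 := by rw [← hui]; linarith
        rw [max_eq_right h1, min_eq_left (by norm_num), mul_zero, sub_zero, ← hui]
      · rw [if_neg (fun hcon => by rcases hcon with ⟨h1, h2⟩ | ⟨h1, h2⟩ <;> linarith)]
        have hbi' : b i = u i / g i := by
          simp only [hbdef]; rw [if_pos ⟨hgi, hui⟩]
        rw [hbi'] at hbi
        have h0 : 0 ≤ u i - α * g i := by
          have := (le_div_iff₀ hgi).mp hbi
          linarith
        have hag : 0 ≤ α * g i := mul_nonneg hαpos.le hgi.le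
        have h1 : u i - α * g i ≤ 1 := by linarith
        rw [max_eq_left h0, min_eq_left h1]
  -- h ≠ 0 from nonstationarity
  obtain ⟨α₀, hα₀pos, hns⟩ := hnonstat
  have hhne : h ≠ 0 := by
    intro hc
    have hβ : (0:ℝ) < min α₀ α₁ := lt_min hα₀pos hα₁pos
    apply hns (min α₀ α₁) ⟨hβ, min_le_left _ _⟩
    rw [key _ hβ (min_le_right _ _), hc, smul_zero, sub_zero]
  -- ⟪g, h⟫ = ‖h‖²
  have hinner : (inner ℝ g h : ℝ) = ‖h‖ ^ 2 := by
    rw [← real_inner_self_eq_norm_sq]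
    simp only [PiLp.inner_apply, RCLike.inner_apply, starRingEnd_apply, star_trivial]
    apply Finset.sum_congr rfl
    intro i _
    rw [hh_apply i]
    split_ifs with hc
    · simp
    · rfl
  have hh2 : (0:ℝ) < ‖h‖ ^ 2 := pow_pos (norm_pos_iff.mpr hhne) 2
  -- derivative of φ(t) = j (u - t • h) at 0
  have hγ : HasDerivAt (fun t : ℝ => u - t • h) (-h) 0 := by
    have h1 : HasDerivAt (fun t : ℝ => t • h) ((1:ℝ) • h) 0 :=
      (hasDerivAt_id 0).smul_const h
    simpa using h1.const_sub u
  have hdiff : DifferentiableAt ℝ j u := (hj.differentiable one_ne_zero) u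
  have hfd : HasFDerivAt j (InnerProductSpace.toDual ℝ _ g) u := by
    have := hdiff.hasGradientAt
    rwa [hasGradientAt_iff_hasFDerivAt] at this
  have hfd' : HasFDerivAt j (InnerProductSpace.toDual ℝ _ g)
      ((fun t : ℝ => u - t • h) 0) := by simpa using hfd
  have hφ : HasDerivAt (fun t : ℝ => j (u - t • h))
      (InnerProductSpace.toDual ℝ _ g (-h)) 0 := hfd'.comp_hasDerivAt 0 hγ
  have hD : InnerProductSpace.toDual ℝ _ g (-h) = -‖h‖ ^ 2 := by
    rw [InnerProductSpace.toDual_apply_apply, inner_neg_right, hinner]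
  rw [hD] at hφ
  -- slope tendsto
  have hslope : Tendsto (slope (fun t : ℝ => j (u - t • h)) 0) (𝓝[>] 0) (𝓝 (-‖h‖ ^ 2)) := by
    have := hasDerivAt_iff_tendsto_slope.mp hφ
    exact this.mono_left (nhdsWithin_mono 0 fun x hx => ne_of_gt hx)
  have hlt : -‖h‖ ^ 2 < -σ * ‖h‖ ^ 2 := by nlinarith
  have hev : ∀ᶠ α in 𝓝[>] (0:ℝ),
      slope (fun t : ℝ => j (u - t • h)) 0 α < -σ * ‖h‖ ^ 2 :=
    hslope.eventually_lt_const hlt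
  obtain ⟨ε, hε, hsub⟩ := (mem_nhdsGT_iff_exists_Ioc_subset).mp hev
  refine ⟨min ε α₁, lt_min hε hα₁pos, ?_⟩
  intro α ⟨hαpos, hαle⟩
  have hαα₁ : α ≤ α₁ := le_trans hαle (min_le_right _ _)
  have hαε : α ≤ ε := le_trans hαle (min_le_left _ _)
  rw [key α hαpos hαα₁]
  have hsl := hsub ⟨hαpos, hαε⟩
  rw [Set.mem_setOf_eq, slope_def_field] at hsl
  have hsl' : (j (u - α • h) - j (u - (0:ℝ) • h)) / (α - 0) < -σ * ‖h‖ ^ 2 := hsl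
  rw [zero_smul, sub_zero, sub_zero] at hsl'
  have hjle : j (u - α • h) ≤ j u - σ * α * ‖h‖ ^ 2 := by
    have := (div_lt_iff₀ hαpos).mp hsl'
    nlinarith
  have hnorm : ‖u - α • h - u‖ = α * ‖h‖ := by
    have : u - α • h - u = -(α • h) := by abel
    rw [this, norm_neg, norm_smul, Real.norm_eq_abs, abs_of_pos hαpos]
  rw [hnorm]
  have : σ / α * (α * ‖h‖) ^ 2 = σ * α * ‖h‖ ^ 2 := by
    field_simp
  rw [this]
  exact hjle
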